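/- Let f: ℝ^d → ℝ be twice continuously differentiable and suppose there exists a positive semidefinite matrix H such that for all w, (∇²f(w))(∇²f(w))ᵀ ⪯ H. Then for all w, w' ∈ ℝ^d, ‖∇f(w) - ∇f(w')‖² ≤ (w - w')ᵀ H (w - w'). -/

import Mathlib

open scoped Matrix

lemma aux_psd_inner {d : ℕ} {P : Matrix (Fin d) (Fin d) ℝ} (hP : P.PosSemidef)
    (v : EuclideanSpace ℝ (Fin d)) :
    0 ≤ inner (𝕜 := ℝ) v (Matrix.toEuclideanCLM (𝕜 := ℝ) P v) := by
  rw [EuclideanSpace.inner_eq_star_dotProduct]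
  simpa [dotProduct_comm] using hP.dotProduct_mulVec_nonneg (WithLp.ofLp v)

theorem stmt1 {d : ℕ} (f : EuclideanSpace ℝ (Fin d) → ℝ)
    (g : EuclideanSpace ℝ (Fin d) → EuclideanSpace ℝ (Fin d))
    (M : EuclideanSpace ℝ (Fin d) → Matrix (Fin d) (Fin d) ℝ)
    (H : Matrix (Fin d) (Fin d) ℝ)
    (hH : H.PosSemidef)
    (hf : ContDiff ℝ 2 f)
    (hg : ∀ w, HasGradientAt f (g w) w)
    (hM : ∀ w, HasFDerivAt g (Matrix.toEuclideanCLM (𝕜 := ℝ) (M w)) w)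
    (hMH : ∀ w, (H - M w * (M w)ᵀ).PosSemidef) :
    ∀ w w' : EuclideanSpace ℝ (Fin d),
      ‖g w - g w'‖ ^ 2 ≤
        inner (𝕜 := ℝ) (w - w') (Matrix.toEuclideanCLM (𝕜 := ℝ) H (w - w')) := by
  set A : EuclideanSpace ℝ (Fin d) → EuclideanSpace ℝ (Fin d) →L[ℝ] EuclideanSpace ℝ (Fin d) :=
    fun x => Matrix.toEuclideanCLM (𝕜 := ℝ) (M x) with hA
  -- symmetry of the Hessian
  have hsym : ∀ x (u v : EuclideanSpace ℝ (Fin d)),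
      inner (𝕜 := ℝ) (A x u) v = inner (𝕜 := ℝ) (A x v) u := by
    intro x u v
    have hf' : ∀ y, HasFDerivAt f (innerSL ℝ (g y)) y := by
      intro y
      have h := (hg y).hasFDerivAt
      have : (InnerProductSpace.toDual ℝ _ (g y) : EuclideanSpace ℝ (Fin d) →L[ℝ] ℝ)
          = innerSL ℝ (g y) := by ext z; simp [InnerProductSpace.toDual_apply_apply]
      rwa [this] at h
    have hx : HasFDerivAt (fun y => innerSL ℝ (g y)) ((innerSL ℝ).comp (A x)) x :=
      (innerSL ℝ).hasFDerivAt.comp x (hM x)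
    exact second_derivative_symmetric hf' hx u v
  -- the matrix M x is symmetric
  have hMsym : ∀ x, (M x)ᵀ = M x := by
    intro x
    have hherm : (M x).IsHermitian := by
      rw [Matrix.isHermitian_iff_isSymmetric]
      intro u v
      calc inner (𝕜 := ℝ) ((Matrix.toEuclideanLin (M x)) u) v
          = inner (𝕜 := ℝ) (A x u) v := rfl
        _ = inner (𝕜 := ℝ) (A x v) u := hsym x u v
        _ = inner (𝕜 := ℝ) u ((Matrix.toEuclideanLin (M x)) v) := real_inner_comm _ _
    simpa [Matrix.IsHermitian] using hherm
  -- pointwise bound on directional derivative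
  intro w w'
  set v := w - w' with hv
  set q : ℝ := inner (𝕜 := ℝ) v (Matrix.toEuclideanCLM (𝕜 := ℝ) H v) with hq
  have hq0 : 0 ≤ q := aux_psd_inner hH v
  have hbound : ∀ x, ‖A x v‖ ^ 2 ≤ q := by
    intro x
    have h1 : 0 ≤ inner (𝕜 := ℝ) v (Matrix.toEuclideanCLM (𝕜 := ℝ) (H - M x * (M x)ᵀ) v) :=
      aux_psd_inner (hMH x) v
    have h2 : (Matrix.toEuclideanCLM (𝕜 := ℝ) (H - M x * (M x)ᵀ)) =
        Matrix.toEuclideanCLM (𝕜 := ℝ) H - (A x).comp (A x) := by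
      rw [map_sub, map_mul, hMsym x]
      rfl
    rw [h2] at h1
    simp only [ContinuousLinearMap.sub_apply, inner_sub_right, ContinuousLinearMap.comp_apply]
      at h1
    have h3 : inner (𝕜 := ℝ) v (A x (A x v)) = ‖A x v‖ ^ 2 := by
      rw [real_inner_comm, hsym x (A x v) v, real_inner_self_eq_norm_sq]
    rw [h3] at h1
    linarith
  have hnb : ∀ x, ‖A x v‖ ≤ Real.sqrt q := by
    intro x
    have := Real.sqrt_le_sqrt (hbound x)
    rwa [Real.sqrt_sq (norm_nonneg _)] at this
  -- mean value inequality along the segment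
  set φ : ℝ → EuclideanSpace ℝ (Fin d) := fun t => g (w' + t • v) with hφ
  have hderiv : ∀ t ∈ Set.Icc (0:ℝ) 1,
      HasDerivWithinAt φ (A (w' + t • v) v) (Set.Icc 0 1) t := by
    intro t _
    have hline : HasDerivAt (fun t : ℝ => w' + t • v) v t := by
      simpa using ((hasDerivAt_id t).smul_const v).const_add w'
    exact ((hM (w' + t • v)).comp_hasDerivAt t hline).hasDerivWithinAt
  have hC : ∀ t ∈ Set.Ico (0:ℝ) 1, ‖A (w' + t • v) v‖ ≤ Real.sqrt q :=
    fun t _ => hnb _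
  have hmvt := norm_image_sub_le_of_norm_deriv_le_segment_01' hderiv hC
  have hφ1 : φ 1 = g w := by simp [hφ, hv]
  have hφ0 : φ 0 = g w' := by simp [hφ]
  rw [hφ1, hφ0] at hmvt
  calc ‖g w - g w'‖ ^ 2 ≤ Real.sqrt q ^ 2 :=
        pow_le_pow_left₀ (norm_nonneg _) hmvt 2
    _ = q := Real.sq_sqrt hq0
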